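/- For κ > 1 and all x > 0, g_κ(x) = Φ(√(1/κ)(κ−1)x) + e^{2x²}·Φ(−√(1/κ)(κ+1)x) > 1/2; in particular the minimum value g_κ(x₀(κ)) exceeds 1/2. -/
import Mathlib


noncomputable def Phi (y : ℝ) : ℝ :=
  (Real.sqrt (2 * Real.pi))⁻¹ * ∫ t in Set.Iic y, Real.exp (-t ^ 2 / 2)

noncomputable def gfun (κ x : ℝ) : ℝ :=
  Phi (Real.sqrt (1 / κ) * (κ - 1) * x) +
    Real.exp (2 * x ^ 2) * Phi (-(Real.sqrt (1 / κ) * (κ + 1) * x))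

open MeasureTheory Set

lemma integrable_gauss : Integrable (fun t : ℝ => Real.exp (-t ^ 2 / 2)) := by
  have h := integrable_exp_neg_mul_sq (by norm_num : (0:ℝ) < 1/2)
  convert h using 2 with t
  ring_nf

lemma sqrt2pi_pos : 0 < Real.sqrt (2 * Real.pi) :=
  Real.sqrt_pos.2 (by positivity)

lemma Phi_pos (z : ℝ) : 0 < Phi z := by
  unfold Phi
  apply mul_pos (inv_pos.2 sqrt2pi_pos)
  rw [setIntegral_pos_iff_support_of_nonneg_ae]
  · have : Function.support (fun t : ℝ => Real.exp (-t ^ 2 / 2)) = Set.univ := by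
      ext t; simp [Function.mem_support, (Real.exp_pos _).ne']
    rw [this, Set.univ_inter]
    simpa using measure_Iic_lt_top (μ := (volume : Measure ℝ))
  · exact Filter.Eventually.of_forall fun t => (Real.exp_pos _).le
  · exact integrable_gauss.integrableOn

lemma integral_Iic_zero : ∫ t in Iic (0:ℝ), Real.exp (-t ^ 2 / 2) = Real.sqrt (2 * Real.pi) / 2 := by
  have htot : ∫ t : ℝ, Real.exp (-t ^ 2 / 2) = Real.sqrt (2 * Real.pi) := by
    have h := integral_gaussian (1/2 : ℝ)
    have : (fun t : ℝ => Real.exp (-t ^ 2 / 2)) = fun t : ℝ => Real.exp (-(1/2) * t ^ 2) := by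
      funext t; ring_nf
    rw [this, h]
    norm_num [Real.pi_pos.le]
    ring
  have hIoi : ∫ t in Ioi (0:ℝ), Real.exp (-t ^ 2 / 2) = Real.sqrt (2 * Real.pi) / 2 := by
    have h := integral_gaussian_Ioi (1/2 : ℝ)
    have heq : (fun t : ℝ => Real.exp (-t ^ 2 / 2)) = fun t : ℝ => Real.exp (-(1/2) * t ^ 2) := by
      funext t; ring_nf
    rw [heq, h]
    congr 1
    norm_num
    ring_nf
  have hsplit := integral_add_compl (measurableSet_Iic (a := (0:ℝ))) integrable_gauss
  rw [compl_Iic] at hsplit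
  linarith [hsplit.symm ▸ htot, hIoi]

lemma Phi_gt_half {y : ℝ} (hy : 0 < y) : 1 / 2 < Phi y := by
  unfold Phi
  have hsub : (∫ t in Iic y, Real.exp (-t ^ 2 / 2)) - ∫ t in Iic (0:ℝ), Real.exp (-t ^ 2 / 2)
      = ∫ t in (0:ℝ)..y, Real.exp (-t ^ 2 / 2) := by
    rw [intervalIntegral.integral_Iic_sub_Iic integrable_gauss.integrableOn
      integrable_gauss.integrableOn]
  have hpos : 0 < ∫ t in (0:ℝ)..y, Real.exp (-t ^ 2 / 2) :=
    intervalIntegral.intervalIntegral_pos_of_pos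
      integrable_gauss.intervalIntegrable (fun t => Real.exp_pos _) hy
  have h2 : Real.sqrt (2 * Real.pi) / 2 < ∫ t in Iic y, Real.exp (-t ^ 2 / 2) := by
    have := integral_Iic_zero
    linarith
  have := sqrt2pi_pos
  rw [inv_mul_eq_div, lt_div_iff₀ this] at *
  linarith

theorem stmt12 (κ : ℝ) (hκ : 1 < κ) (x : ℝ) (hx : 0 < x) :
    1 / 2 < gfun κ x := by
  have ha : 0 < Real.sqrt (1 / κ) * (κ - 1) * x := by
    apply mul_pos (mul_pos (Real.sqrt_pos.2 (by positivity)) (by linarith)) hx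
  have h1 := Phi_gt_half ha
  have h2 : 0 < Real.exp (2 * x ^ 2) * Phi (-(Real.sqrt (1 / κ) * (κ + 1) * x)) :=
    mul_pos (Real.exp_pos _) (Phi_pos _)
  unfold gfun
  linarith
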